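/- Let L ∈ (0,1), set ℓ = 1 − L, let m be a natural number, and let θ ∈ ℝ satisfy −1 < cos θ < 1. Then there exists ω with mπ/L < ω < (m+1)π/L such that 2·(cos(Lω) − cos θ) = ℓ·ω·sin(Lω). -/

import Mathlib

theorem exists_solution_branch
    (L : ℝ) (hL0 : 0 < L) (hL1 : L < 1) (m : ℕ) (θ : ℝ)
    (hθ1 : -1 < Real.cos θ) (hθ2 : Real.cos θ < 1) :
    ∃ ω : ℝ, m * Real.pi / L < ω ∧ ω < (m + 1) * Real.pi / L ∧
      2 * (Real.cos (L * ω) - Real.cos θ) = (1 - L) * ω * Real.sin (L * ω) := by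
  set f : ℝ → ℝ := fun ω => 2 * (Real.cos (L * ω) - Real.cos θ) - (1 - L) * ω * Real.sin (L * ω)
    with hf
  set a : ℝ := m * Real.pi / L with ha
  set b : ℝ := (m + 1) * Real.pi / L with hb
  have hL : L ≠ 0 := ne_of_gt hL0
  have hLa : L * a = m * Real.pi := by rw [ha]; field_simp
  have hLb : L * b = (m + 1) * Real.pi := by rw [hb]; field_simp
  have hcos : ∀ n : ℕ, Real.cos (n * Real.pi) = (-1) ^ n := by
    intro n
    have := Real.cos_nat_mul_pi_sub 0 n
    simpa using this
  have hfa : f a = 2 * ((-1) ^ m - Real.cos θ) := by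
    simp [hf, hLa, Real.sin_nat_mul_pi, hcos]
  have hfb : f b = 2 * ((-1) ^ (m + 1) - Real.cos θ) := by
    have h1 : ((m : ℝ) + 1) * Real.pi = ((m + 1 : ℕ) : ℝ) * Real.pi := by push_cast; ring
    simp [hf, hLb, h1, Real.sin_nat_mul_pi, hcos]
  have hab : a ≤ b := by
    rw [ha, hb]
    gcongr
    nlinarith [Real.pi_pos]
  have hcont : ContinuousOn f (Set.Icc a b) := by
    apply Continuous.continuousOn
    have h1 : Continuous fun ω : ℝ => L * ω := continuous_const.mul continuous_id
    exact ((continuous_const.mul ((Real.continuous_cos.comp h1).sub continuous_const)).sub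
      ((continuous_const.mul continuous_id).mul (Real.continuous_sin.comp h1)))
  have key : (0 : ℝ) ∈ f '' Set.Ioo a b := by
    rcases Nat.even_or_odd m with he | ho
    · have hfa' : f a = 2 * (1 - Real.cos θ) := by rw [hfa, he.neg_one_pow]
      have hfb' : f b = 2 * (-1 - Real.cos θ) := by
        rw [hfb, Odd.neg_one_pow (by simpa using he.add_one)]
      apply intermediate_value_Ioo' hab hcont
      constructor
      · rw [hfb']; linarith
      · rw [hfa']; linarith
    · have hfa' : f a = 2 * (-1 - Real.cos θ) := by rw [hfa, ho.neg_one_pow]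
      have hfb' : f b = 2 * (1 - Real.cos θ) := by
        rw [hfb, Even.neg_one_pow (by simpa using ho.add_one)]
      apply intermediate_value_Ioo hab hcont
      constructor
      · rw [hfa']; linarith
      · rw [hfb']; linarith
  obtain ⟨ω, hω, hfω⟩ := key
  exact ⟨ω, hω.1, hω.2, by have := hfω; simp [hf] at this; linarith⟩
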